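/- arXiv:1512.04797 — 2 statements merged into one kernel-verified Lean document; each statement's English description precedes it below -/
import Mathlib

section
/- Let M > 0 and t_f > 0 with 4M < t_f² < 6M, t₁ = (t_f − √(3(t_f² − 4M)))/2, and let u* be the piecewise control equal to -1 on [0, t₁], to (2t − t_f)/√(3(t_f² − 4M)) on [t₁, t_f − t₁], and to 1 on [t_f − t₁, t_f]. Let q solve q̈ = u*, q(0) = M, q̇(0) = 0. Then q(t_f) = 0 and q̇(t_f) = 0. -/
lemma my_quad (a b c x : ℝ) : HasDerivAt (fun t => a*t^2 + b*t + c) (2*a*x + b) x := by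
  have h := (((hasDerivAt_pow 2 x).const_mul a).add ((hasDerivAt_id x).const_mul b)).add_const c
  have hv : a * (2*x) + b = 2*a*x + b := by ring
  exact hv ▸ (by simpa using h)

lemma my_cubic (a b c d x : ℝ) :
    HasDerivAt (fun t => a*t^3 + b*t^2 + c*t + d) (3*a*x^2 + 2*b*x + c) x := by
  have h := ((((hasDerivAt_pow 3 x).const_mul a).add ((hasDerivAt_pow 2 x).const_mul b)).add
    ((hasDerivAt_id x).const_mul c)).add_const d
  have hv : a * (3*x^2) + b * (2*x) + c = 3*a*x^2 + 2*b*x + c := by ring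
  exact hv ▸ (by simpa using h)

lemma my_piece {v F : ℝ → ℝ} {a b x d : ℝ}
    (hEq : ∀ y ∈ Set.Icc a b, v y = F y)
    (hF : x ∈ Set.Icc a b → HasDerivAt F d x) :
    HasDerivWithinAt v d (Set.Icc a b) x := by
  by_cases hx : x ∈ Set.Icc a b
  · exact ((hF hx).hasDerivWithinAt).congr (fun y hy => hEq y hy) (hEq x hx)
  · exact HasFDerivWithinAt.of_notMem_closure (by rwa [isClosed_Icc.closure_eq])

theorem stmt_9 (M t_f : ℝ) (hM : 0 < M) (htf : 0 < t_f)
    (h1 : 4 * M < t_f ^ 2) (h2 : t_f ^ 2 < 6 * M)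
    (t₁ : ℝ) (ht₁ : t₁ = (t_f - Real.sqrt (3 * (t_f ^ 2 - 4 * M))) / 2)
    (u : ℝ → ℝ)
    (hu : ∀ t, u t = if t ≤ t₁ then -1
      else if t ≤ t_f - t₁ then (2 * t - t_f) / Real.sqrt (3 * (t_f ^ 2 - 4 * M))
      else 1)
    (q q' : ℝ → ℝ)
    (hq : ∀ t ∈ Set.Icc 0 t_f, HasDerivWithinAt q (q' t) (Set.Icc 0 t_f) t)
    (hq' : ∀ t ∈ Set.Icc 0 t_f, HasDerivWithinAt q' (u t) (Set.Icc 0 t_f) t)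
    (h0 : q 0 = M) (h0' : q' 0 = 0) :
    q t_f = 0 ∧ q' t_f = 0 := by
  obtain ⟨s, hsval⟩ : ∃ s : ℝ, Real.sqrt (3 * (t_f ^ 2 - 4 * M)) = s := ⟨_, rfl⟩
  have hspos : 0 < s := hsval ▸ Real.sqrt_pos.2 (by nlinarith)
  have hsne : s ≠ 0 := ne_of_gt hspos
  have hs2 : s ^ 2 = 3 * (t_f ^ 2 - 4 * M) := by
    rw [← hsval]; exact Real.sq_sqrt (by nlinarith)
  rw [hsval] at ht₁
  simp only [hsval] at hu
  have hM' : M = t_f ^ 2 / 4 - s ^ 2 / 12 := by linarith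
  have hstf : s < t_f := by nlinarith
  set t₂ : ℝ := t_f - t₁ with ht₂def
  have h01 : 0 < t₁ := by rw [ht₁]; linarith
  have h12 : t₁ < t₂ := by rw [ht₂def, ht₁]; linarith
  have h2f : t₂ < t_f := by rw [ht₂def]; linarith
  have hE1 : t_f - 2 * t₁ = s := by rw [ht₁]; ring
  -- middle velocity coefficient
  set cv : ℝ := (t_f * t₁ - t₁ ^ 2) / s - t₁ with hcv
  set Cp : ℝ := M - t₁ ^ 2 / 2 -
      ((1/(3*s))*t₁^3 + (-(t_f/(2*s)))*t₁^2 + cv*t₁) with hCp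
  set v : ℝ → ℝ := fun t => if t ≤ t₁ then -t
      else if t ≤ t₂ then (1/s)*t^2 + (-(t_f/s))*t + cv
      else t - t₂ - t₁ with hvdef
  set p : ℝ → ℝ := fun t => if t ≤ t₁ then (-(1/2))*t^2 + 0*t + M
      else if t ≤ t₂ then (1/(3*s))*t^3 + (-(t_f/(2*s)))*t^2 + cv*t + Cp
      else (1/2)*t^2 + (-(t₂+t₁))*t + (t₂+t₁)^2/2 with hpdef
  -- junction value identities
  have idA : (1/s)*t₁^2 + (-(t_f/s))*t₁ + cv = -t₁ := by
    rw [hcv]; field_simp; ring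
  have idB : (1/s)*t₂^2 + (-(t_f/s))*t₂ + cv = t₂ - t₂ - t₁ := by
    rw [hcv, ht₂def]; field_simp; ring
  have idD : (1/(3*s))*t₂^3 + (-(t_f/(2*s)))*t₂^2 + cv*t₂ + Cp =
      (1/2)*t₂^2 + (-(t₂+t₁))*t₂ + (t₂+t₁)^2/2 := by
    rw [hCp, hcv, ht₂def, ht₁, hM']; field_simp; ring
  -- EqOn facts for v
  have veqL : ∀ y ∈ Set.Icc (0:ℝ) t₁, v y = -y := by
    intro y hy; rw [hvdef]; simp only [if_pos hy.2]
  have veqM : ∀ y ∈ Set.Icc t₁ t₂, v y = (1/s)*y^2 + (-(t_f/s))*y + cv := by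
    intro y hy; rw [hvdef]; dsimp only
    split_ifs with hy1 hy2
    · have : y = t₁ := le_antisymm hy1 hy.1
      rw [this, idA]
    · rfl
    · exact absurd hy.2 hy2
  have veqR : ∀ y ∈ Set.Icc t₂ t_f, v y = y - t₂ - t₁ := by
    intro y hy; rw [hvdef]; dsimp only
    split_ifs with hy1 hy2
    · exact absurd hy.1 (by push_neg; linarith)
    · have : y = t₂ := le_antisymm hy2 hy.1
      rw [this, idB]
    · rfl
  -- EqOn facts for p
  have peqL : ∀ y ∈ Set.Icc (0:ℝ) t₁, p y = (-(1/2))*y^2 + 0*y + M := by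
    intro y hy; rw [hpdef]; simp only [if_pos hy.2]
  have peqM : ∀ y ∈ Set.Icc t₁ t₂, p y = (1/(3*s))*y^3 + (-(t_f/(2*s)))*y^2 + cv*y + Cp := by
    intro y hy; rw [hpdef]; dsimp only
    split_ifs with hy1 hy2
    · have hyt : y = t₁ := le_antisymm hy1 hy.1
      rw [hyt, hCp]; ring
    · rfl
    · exact absurd hy.2 hy2
  have peqR : ∀ y ∈ Set.Icc t₂ t_f, p y = (1/2)*y^2 + (-(t₂+t₁))*y + (t₂+t₁)^2/2 := by
    intro y hy; rw [hpdef]; dsimp only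
    split_ifs with hy1 hy2
    · exact absurd hy.1 (by push_neg; linarith)
    · have : y = t₂ := le_antisymm hy2 hy.1
      rw [this, idD]
    · rfl
  have hsub : Set.Icc (0:ℝ) t_f ⊆ (Set.Icc 0 t₁ ∪ Set.Icc t₁ t₂) ∪ Set.Icc t₂ t_f := by
    intro y hy
    rcases le_or_gt y t₁ with h | h
    · exact Or.inl (Or.inl ⟨hy.1, h⟩)
    · rcases le_or_gt y t₂ with h' | h'
      · exact Or.inl (Or.inr ⟨le_of_lt h, h'⟩)
      · exact Or.inr ⟨le_of_lt h', hy.2⟩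
  -- derivative of v
  have hv : ∀ x ∈ Set.Icc (0:ℝ) t_f, HasDerivWithinAt v (u x) (Set.Icc 0 t_f) x := by
    intro x hx
    have hL : HasDerivWithinAt v (u x) (Set.Icc 0 t₁) x := by
      refine my_piece veqL (fun hx1 => ?_)
      have : u x = -1 := by rw [hu]; simp [hx1.2]
      rw [this]
      exact (hasDerivAt_id x).neg
    have hMm : HasDerivWithinAt v (u x) (Set.Icc t₁ t₂) x := by
      refine my_piece veqM (fun hx1 => ?_)
      have hux : u x = 2*(1/s)*x + (-(t_f/s)) := by
        rw [hu]
        split_ifs with hxa hxb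
        · have hxx : x = t₁ := le_antisymm hxa hx1.1
          rw [hxx]; field_simp; linarith
        · field_simp; ring
        · exact absurd hx1.2 hxb
      rw [hux]
      exact my_quad (1/s) (-(t_f/s)) cv x
    have hR : HasDerivWithinAt v (u x) (Set.Icc t₂ t_f) x := by
      refine my_piece veqR (fun hx1 => ?_)
      have hux : u x = 1 := by
        rw [hu]
        split_ifs with hxa hxb
        · exact absurd hx1.1 (by push_neg; linarith)
        · have hxx : x = t₂ := le_antisymm (by rw [ht₂def]; exact hxb) hx1.1
          rw [hxx, ht₂def, ht₁]
          rw [div_eq_one_iff_eq hsne]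
          ring
        · rfl
      rw [hux]
      exact ((hasDerivAt_id x).sub_const t₂).sub_const t₁
    exact ((hL.union hMm).union hR).mono hsub
  -- derivative of p
  have hp : ∀ x ∈ Set.Icc (0:ℝ) t_f, HasDerivWithinAt p (v x) (Set.Icc 0 t_f) x := by
    intro x hx
    have hL : HasDerivWithinAt p (v x) (Set.Icc 0 t₁) x := by
      refine my_piece peqL (fun hx1 => ?_)
      have : v x = 2*(-(1/2))*x + 0 := by rw [veqL x hx1]; ring
      rw [this]
      exact my_quad (-(1/2)) 0 M x
    have hMm : HasDerivWithinAt p (v x) (Set.Icc t₁ t₂) x := by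
      refine my_piece peqM (fun hx1 => ?_)
      have : v x = 3*(1/(3*s))*x^2 + 2*(-(t_f/(2*s)))*x + cv := by
        rw [veqM x hx1]; ring
      rw [this]
      exact my_cubic (1/(3*s)) (-(t_f/(2*s))) cv Cp x
    have hR : HasDerivWithinAt p (v x) (Set.Icc t₂ t_f) x := by
      refine my_piece peqR (fun hx1 => ?_)
      have : v x = 2*(1/2)*x + (-(t₂+t₁)) := by rw [veqR x hx1]; ring
      rw [this]
      exact my_quad (1/2) (-(t₂+t₁)) ((t₂+t₁)^2/2) x
    exact ((hL.union hMm).union hR).mono hsub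
  -- uniqueness for q'
  have htf0 : (0:ℝ) ∈ Set.Icc (0:ℝ) t_f := ⟨le_refl 0, le_of_lt htf⟩
  have htff : t_f ∈ Set.Icc (0:ℝ) t_f := ⟨le_of_lt htf, le_refl t_f⟩
  have cq' : ContinuousOn q' (Set.Icc 0 t_f) := fun t ht => (hq' t ht).continuousWithinAt
  have cq : ContinuousOn q (Set.Icc 0 t_f) := fun t ht => (hq t ht).continuousWithinAt
  have cv' : ContinuousOn v (Set.Icc 0 t_f) := fun t ht => (hv t ht).continuousWithinAt
  have cp : ContinuousOn p (Set.Icc 0 t_f) := fun t ht => (hp t ht).continuousWithinAt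
  have hv0 : v 0 = 0 := by rw [veqL 0 ⟨le_refl 0, le_of_lt h01⟩]; ring
  have hp0 : p 0 = M := by rw [peqL 0 ⟨le_refl 0, le_of_lt h01⟩]; ring
  have hqv : ∀ y ∈ Set.Icc (0:ℝ) t_f, q' y = v y := by
    refine eq_of_has_deriv_right_eq (f' := u) (fun x hx => ?_) (fun x hx => ?_) cq' cv'
      (by rw [h0', hv0])
    · exact (hq' x (Set.Ico_subset_Icc_self hx)).mono_of_mem_nhdsWithin
        (Icc_mem_nhdsGE_of_mem hx)
    · exact (hv x (Set.Ico_subset_Icc_self hx)).mono_of_mem_nhdsWithin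
        (Icc_mem_nhdsGE_of_mem hx)
  have hqp : ∀ y ∈ Set.Icc (0:ℝ) t_f, q y = p y := by
    refine eq_of_has_deriv_right_eq (f' := q') (fun x hx => ?_) (fun x hx => ?_) cq cp
      (by rw [h0, hp0])
    · exact (hq x (Set.Ico_subset_Icc_self hx)).mono_of_mem_nhdsWithin
        (Icc_mem_nhdsGE_of_mem hx)
    · have := (hp x (Set.Ico_subset_Icc_self hx)).mono_of_mem_nhdsWithin
        (Icc_mem_nhdsGE_of_mem hx)
      rwa [← hqv x (Set.Ico_subset_Icc_self hx)] at this
  have hvtf : v t_f = 0 := by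
    rw [veqR t_f ⟨le_of_lt h2f, le_refl t_f⟩, ht₂def]; ring
  have hptf : p t_f = 0 := by
    rw [peqR t_f ⟨le_of_lt h2f, le_refl t_f⟩, ht₂def]; ring
  exact ⟨(hqp t_f htff).trans hptf, (hqv t_f htff).trans hvtf⟩
end

section
/- Let M > 0 and t_f > 0 with 4M < t_f² < 6M, and set t₁ = (t_f − √(3(t_f² − 4M)))/2 and u* as the three-piece control of the parking problem. Then ∫₀^{t_f} u*(τ)² dτ = 2t₁ + (t_f − 2t₁)/3. -/
theorem stmt_15 (M t_f : ℝ) (hM : 0 < M) (htf : 0 < t_f)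
    (h1 : 4 * M < t_f ^ 2) (h2 : t_f ^ 2 < 6 * M)
    (t₁ : ℝ) (ht₁ : t₁ = (t_f - Real.sqrt (3 * (t_f ^ 2 - 4 * M))) / 2)
    (u : ℝ → ℝ)
    (hu : ∀ t, u t = if t ≤ t₁ then -1
      else if t ≤ t_f - t₁ then (2 * t - t_f) / Real.sqrt (3 * (t_f ^ 2 - 4 * M))
      else 1) :
    ∫ τ in (0 : ℝ)..t_f, (u τ) ^ 2 = 2 * t₁ + (t_f - 2 * t₁) / 3 := by
  set s := Real.sqrt (3 * (t_f ^ 2 - 4 * M)) with hsdef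
  have hpos : (0:ℝ) < 3 * (t_f ^ 2 - 4 * M) := by nlinarith
  have hs : 0 < s := Real.sqrt_pos.mpr hpos
  have hs2 : s ^ 2 = 3 * (t_f ^ 2 - 4 * M) := Real.sq_sqrt hpos.le
  have hst : s < t_f := by
    exact (Real.sqrt_lt' htf).mpr (by nlinarith)
  have ht1pos : 0 < t₁ := by rw [ht₁]; linarith
  have hkey : t_f - 2 * t₁ = s := by rw [ht₁]; ring
  have ht1lt : t₁ < t_f - t₁ := by nlinarith
  have htf1 : t_f - t₁ < t_f := by linarith
  -- middle function and its antiderivative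
  have hderiv : ∀ t : ℝ, HasDerivAt (fun t => (2 * t - t_f) ^ 3 / (6 * s ^ 2))
      (((2 * t - t_f) / s) ^ 2) t := by
    intro t
    have h1' : HasDerivAt (fun t : ℝ => 2 * t - t_f) 2 t := by
      simpa using ((hasDerivAt_id t).const_mul 2).sub_const t_f
    have h2' := (h1'.pow 3).div_const (6 * s ^ 2)
    refine h2'.congr_deriv ?_
    field_simp
    ring
  have hcont : Continuous fun t : ℝ => ((2 * t - t_f) / s) ^ 2 := by continuity
  -- piecewise equalities
  have e1 : ∫ τ in (0:ℝ)..t₁, (u τ) ^ 2 = ∫ τ in (0:ℝ)..t₁, (1:ℝ) := by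
    apply intervalIntegral.integral_congr
    intro t ht
    rw [Set.uIcc_of_le ht1pos.le] at ht
    show u t ^ 2 = 1
    rw [hu t, if_pos ht.2]
    norm_num
  have e2 : ∫ τ in t₁..(t_f - t₁), (u τ) ^ 2
      = ∫ τ in t₁..(t_f - t₁), ((2 * τ - t_f) / s) ^ 2 := by
    apply intervalIntegral.integral_congr
    intro t ht
    rw [Set.uIcc_of_le ht1lt.le] at ht
    show u t ^ 2 = ((2 * t - t_f) / s) ^ 2
    rw [hu t]
    rcases eq_or_lt_of_le ht.1 with h | h
    · rw [if_pos h.symm.le, ← h]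
      have : (2 * t₁ - t_f) / s = -1 := by
        rw [show 2 * t₁ - t_f = -s by linarith]
        field_simp
      rw [this]
    · rw [if_neg (not_le.mpr h), if_pos ht.2]
  have e3 : ∫ τ in (t_f - t₁)..t_f, (u τ) ^ 2 = ∫ τ in (t_f - t₁)..t_f, (1:ℝ) := by
    apply intervalIntegral.integral_congr
    intro t ht
    rw [Set.uIcc_of_le htf1.le] at ht
    show u t ^ 2 = 1
    rw [hu t]
    rcases eq_or_lt_of_le ht.1 with h | h
    · rw [if_neg (by push_neg; linarith), if_pos (le_of_eq h.symm), ← h]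
      rw [show 2 * (t_f - t₁) - t_f = s by linarith]
      field_simp
    · rw [if_neg (by push_neg; linarith), if_neg (not_le.mpr h)]
      norm_num
  -- integrability of u^2 on each piece
  have i1 : IntervalIntegrable (fun τ => (u τ) ^ 2) MeasureTheory.volume 0 t₁ := by
    apply intervalIntegrable_const (c := (1:ℝ)) |>.congr
    intro t ht
    dsimp only
    rw [Set.uIoc_of_le ht1pos.le] at ht
    rw [hu t, if_pos ht.2]; norm_num
  have i2 : IntervalIntegrable (fun τ => (u τ) ^ 2) MeasureTheory.volume t₁ (t_f - t₁) := by
    apply (hcont.intervalIntegrable t₁ (t_f - t₁)).congr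
    intro t ht
    dsimp only
    rw [Set.uIoc_of_le ht1lt.le] at ht
    rw [hu t, if_neg (not_le.mpr ht.1), if_pos ht.2]
  have i3 : IntervalIntegrable (fun τ => (u τ) ^ 2) MeasureTheory.volume (t_f - t₁) t_f := by
    apply intervalIntegrable_const (c := (1:ℝ)) |>.congr
    intro t ht
    dsimp only
    rw [Set.uIoc_of_le htf1.le] at ht
    rw [hu t, if_neg (by push_neg; linarith [ht.1]), if_neg (not_le.mpr ht.1)]
    norm_num
  rw [← intervalIntegral.integral_add_adjacent_intervals (i1.trans i2) i3,
      ← intervalIntegral.integral_add_adjacent_intervals i1 i2, e1, e2, e3]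
  rw [intervalIntegral.integral_eq_sub_of_hasDerivAt (fun t _ => hderiv t)
      (hcont.intervalIntegrable _ _)]
  simp only [intervalIntegral.integral_const, smul_eq_mul, mul_one]
  rw [show 2 * (t_f - t₁) - t_f = s by linarith, show 2 * t₁ - t_f = -s by linarith]
  field_simp
  linear_combination (-6) * hkey
end
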